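/- arXiv:2311.17793 — 2 statements merged into one kernel-verified Lean document; each statement's English description precedes it below -/
import Mathlib

section
/- Let P be an LR-vine and a, b nodes of P. If U_a ⊆ U_b then a ≤ b, where U_x denotes the set of minimal elements below x. Consequently, if U_a = U_b then a = b. -/
/-- The `i`-th associated graph of a graded poset: vertices are the elements of rank `i`,
with `a` and `b` adjacent when they are (distinct, of rank `i` and) covered by a common
element (which then has cover-set `{a, b}`). -/
def coverGraph {P : Type*} [PartialOrder P] (rk : P → ℕ) (i : ℕ) : SimpleGraph P where
  Adj a b := a ≠ b ∧ rk a = i ∧ rk b = i ∧ ∃ v : P, a ⋖ v ∧ b ⋖ v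
  symm := ⟨by
    rintro a b ⟨hne, ha, hb, v, h1, h2⟩
    exact ⟨hne.symm, hb, ha, v, h2, h1⟩⟩
  loopless := ⟨by rintro a ⟨hne, -⟩; exact hne rfl⟩

/-- A vine: a finite graded poset (with rank function `rk`, minimal elements of rank 1)
in which every non-minimal node covers exactly two nodes, any two distinct nodes of the
same rank are covered by at most one common node, and each associated graph is a
forest. -/
structure IsVine {P : Type*} [PartialOrder P] [Finite P] (rk : P → ℕ) : Prop where
  rk_strictMono : ∀ x y : P, x < y → rk x < rk y
  rk_covBy : ∀ x y : P, x ⋖ y → rk y = rk x + 1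
  rk_min : ∀ x : P, IsMin x → rk x = 1
  covers_two : ∀ v : P, ¬ IsMin v → {a : P | a ⋖ v}.ncard = 2
  cover_unique : ∀ a b : P, a ≠ b → rk a = rk b →
    ∀ v w : P, a ⋖ v → b ⋖ v → a ⋖ w → b ⋖ w → v = w
  forest : ∀ i : ℕ, (coverGraph rk i).IsAcyclic

/-- The rank of a graded poset: the largest rank of an element. -/
noncomputable def vineRank {P : Type*} (rk : P → ℕ) : ℕ := sSup (Set.range rk)

/-- The proximity condition: any two distinct nodes of the same rank `≥ 2` that are
covered by a common node themselves cover a common node. -/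
def Proximity {P : Type*} [PartialOrder P] (rk : P → ℕ) : Prop :=
  ∀ a b : P, a ≠ b → rk a = rk b → 2 ≤ rk a →
    (∃ v : P, a ⋖ v ∧ b ⋖ v) → ∃ c : P, c ⋖ a ∧ c ⋖ b

/-- A regular vine (R-vine): a vine whose rank equals its dimension (the number of
minimal elements), whose associated forests (for `1 ≤ i ≤ rank`) are trees, and
which satisfies the proximity condition. -/
structure IsRVine {P : Type*} [PartialOrder P] [Finite P] (rk : P → ℕ)
    extends IsVine rk : Prop where
  rank_eq_dim : vineRank rk = {x : P | IsMin x}.ncard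
  tree : ∀ i : ℕ, 1 ≤ i → i ≤ vineRank rk →
    ((coverGraph rk i).induce {x : P | rk x = i}).Connected
  proximity : Proximity rk

/-- A locally regular vine (LR-vine): a vine all of whose principal ideals
(with the induced order and rank) are R-vines. -/
def IsLRVine {P : Type*} [PartialOrder P] [Finite P] (rk : P → ℕ) : Prop :=
  IsVine rk ∧ ∀ v : P, IsRVine (P := {x : P // x ≤ v}) (fun x => rk x.val)

/-- The complete union of a node: the set of minimal elements below it. -/
def completeUnion {P : Type*} [PartialOrder P] (a : P) : Set P :=
  {x : P | IsMin x ∧ x ≤ a}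

/-- The conditioned set of a (non-minimal) node `v`: the minimal elements lying below
exactly one of the two nodes covered by `v` (the symmetric difference of the complete
unions of the two covered nodes). -/
def conditionedSet {P : Type*} [PartialOrder P] (v : P) : Set P :=
  {m : P | IsMin m ∧ ∃! a : P, a ⋖ v ∧ m ≤ a}

section AuxLemmas

variable {P : Type*} [PartialOrder P] [Finite P] {rk : P → ℕ}

private lemma vine_rk_pos (h : IsVine rk) (x : P) : 1 ≤ rk x := by
  by_contra hcon
  have hx0 : rk x = 0 := by omega
  by_cases hmin : IsMin x
  · have := h.rk_min x hmin; omega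
  · have h2 := h.covers_two x hmin
    have hne : {a : P | a ⋖ x}.Nonempty := by
      apply Set.nonempty_of_ncard_ne_zero; omega
    obtain ⟨y, hy⟩ := hne
    have := h.rk_covBy y x hy
    omega

private lemma cover_lift (h : IsLRVine rk) (b : P) (x y : {z : P // z ≤ b})
    (hxy : x ⋖ y) : x.val ⋖ y.val := by
  have hr : rk y.val = rk x.val + 1 := (h.2 b).rk_covBy x y hxy
  refine ⟨Subtype.coe_lt_coe.mpr hxy.lt, ?_⟩
  intro z hz hz'
  have h1 := h.1.rk_strictMono _ _ hz
  have h2 := h.1.rk_strictMono _ _ hz'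
  omega

private lemma completeUnion_main (h : IsLRVine rk) :
    ∀ n (a b : P), rk a = n → completeUnion a ⊆ completeUnion b → a ≤ b := by
  intro n
  induction n using Nat.strong_induction_on with
  | _ n ih =>
  intro a b hn hsub
  classical
  by_cases hmin : IsMin a
  · exact (hsub ⟨hmin, le_refl a⟩).2
  · obtain ⟨a1, a2, hne, hset⟩ := Set.ncard_eq_two.mp (h.1.covers_two a hmin)
    have hc1 : a1 ⋖ a := by
      have : a1 ∈ ({a1, a2} : Set P) := by simp
      rw [← hset] at this; exact this
    have hc2 : a2 ⋖ a := by
      have : a2 ∈ ({a1, a2} : Set P) := by simp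
      rw [← hset] at this; exact this
    have hr1 : rk a = rk a1 + 1 := h.1.rk_covBy _ _ hc1
    have hr2 : rk a = rk a2 + 1 := h.1.rk_covBy _ _ hc2
    have hle1 : a1 ≤ b := ih (rk a1) (by omega) a1 b rfl
      (fun m hm => hsub ⟨hm.1, hm.2.trans hc1.le⟩)
    have hle2 : a2 ≤ b := ih (rk a2) (by omega) a2 b rfl
      (fun m hm => hsub ⟨hm.1, hm.2.trans hc2.le⟩)
    set Q := {z : P // z ≤ b} with hQdef
    set rk' : Q → ℕ := fun x => rk x.val with hrk'def
    set k := rk a1 with hkdef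
    have hka2 : rk a2 = k := by omega
    have a1' : Q := ⟨a1, hle1⟩
    have a2' : Q := ⟨a2, hle2⟩
    have hkpos : 1 ≤ k := vine_rk_pos h.1 a1
    have hkle : k ≤ vineRank rk' :=
      le_csSup (Set.Finite.bddAbove (Set.finite_range rk')) ⟨(⟨a1, hle1⟩ : Q), rfl⟩
    have hconn := (h.2 b).tree k hkpos hkle
    -- vertices of the induced graph
    have ha1mem : (⟨a1, hle1⟩ : Q) ∈ {x : Q | rk' x = k} := rfl
    have ha2mem : (⟨a2, hle2⟩ : Q) ∈ {x : Q | rk' x = k} := hka2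
    obtain ⟨p⟩ := hconn.preconnected ⟨⟨a1, hle1⟩, ha1mem⟩ ⟨⟨a2, hle2⟩, ha2mem⟩
    -- the graph hom into the ambient cover graph
    let φ : ((coverGraph rk' k).induce {x : Q | rk' x = k}) →g (coverGraph rk k) :=
      { toFun := fun x => x.val.val
        map_rel' := by
          rintro x y ⟨hne', hk1, hk2, v, hv1, hv2⟩
          exact ⟨fun heq => hne' (Subtype.ext heq), hk1, hk2, v.val,
            cover_lift h b _ v hv1, cover_lift h b _ v hv2⟩ }
    have hφinj : Function.Injective φ := by
      intro x y hxy
      exact Subtype.ext (Subtype.ext hxy)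
    have hadj : (coverGraph rk k).Adj a1 a2 := ⟨hne, rfl, hka2, a, hc1, hc2⟩
    have huniq := SimpleGraph.isAcyclic_iff_path_unique.mp (h.1.forest k)
    let q := p.toPath
    have hmap : (q.val.map φ).IsPath :=
      SimpleGraph.Walk.map_isPath_of_injective hφinj q.property
    have hpq := huniq ⟨q.val.map φ, hmap⟩
      (SimpleGraph.Path.singleton hadj)
    have hlen : (q.val.map φ).length = 1 := by
      have hval := congrArg Subtype.val hpq
      simp only at hval
      rw [hval]
      simp [SimpleGraph.Path.singleton]
    rw [SimpleGraph.Walk.length_map] at hlen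
    have hadjQ := q.val.adj_of_length_eq_one hlen
    have hadjQ' : (coverGraph rk' k).Adj ⟨a1, hle1⟩ ⟨a2, hle2⟩ := hadjQ
    obtain ⟨-, -, -, w, hw1, hw2⟩ := hadjQ'
    have cw1 : a1 ⋖ w.val := cover_lift h b _ w hw1
    have cw2 : a2 ⋖ w.val := cover_lift h b _ w hw2
    have : a = w.val := h.1.cover_unique a1 a2 hne (by omega) a w.val hc1 hc2 cw1 cw2
    rw [this]
    exact w.property

end AuxLemmas

/-- In an LR-vine, if the complete union of `a` is contained in that of `b` then
`a ≤ b`; consequently, equal complete unions force equal nodes. -/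
theorem completeUnion_subset_imp_le {P : Type*} [PartialOrder P] [Finite P]
    (rk : P → ℕ) (h : IsLRVine rk) (a b : P) :
    (completeUnion a ⊆ completeUnion b → a ≤ b) ∧
    (completeUnion a = completeUnion b → a = b) := by
  refine ⟨fun hs => completeUnion_main h _ a b rfl hs, fun he => ?_⟩
  exact le_antisymm (completeUnion_main h _ a b rfl he.subset)
    (completeUnion_main h _ b a rfl he.symm.subset)
end

section
/- Let u and v be two non-minimal nodes in an LR-vine P. If the conditioned sets of u and v are equal (C_u = C_v), then u = v. -/
section AuxLemmas

variable {P : Type*} [PartialOrder P]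

private lemma aux_exists_covBy_of_lt [Finite P] {y u : P} (h : y < u) :
    ∃ c, y ≤ c ∧ c ⋖ u := by
  obtain ⟨c, hc, hmax⟩ := Set.Finite.exists_maximalFor id {z : P | y ≤ z ∧ z < u}
    (Set.toFinite _) ⟨y, le_refl y, h⟩
  refine ⟨c, hc.1, hc.2, ?_⟩
  intro z hz1 hz2
  exact absurd (hmax (j := z) ⟨le_trans hc.1 hz1.le, hz2⟩ hz1.le) (not_le_of_gt hz1)

private lemma aux_covBy_subtype {w : P} {a b : {z : P // z ≤ w}} (h : a ⋖ b) :
    a.val ⋖ b.val := by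
  refine ⟨Subtype.coe_lt_coe.mpr h.1, ?_⟩
  intro z hz1 hz2
  have hzw : z ≤ w := le_trans hz2.le b.prop
  exact h.2 (Subtype.coe_lt_coe.mp hz1 : a < ⟨z, hzw⟩)
    (Subtype.coe_lt_coe.mp hz2 : (⟨z, hzw⟩ : {z' : P // z' ≤ w}) < b)

private lemma aux_isMin_subtype_of {w : P} {a : {z : P // z ≤ w}} (h : IsMin a) :
    IsMin a.val := by
  intro c hc
  exact Subtype.coe_le_coe.mpr (h (b := ⟨c, le_trans hc a.prop⟩) hc)

private lemma aux_isMin_subtype_to {w : P} {a : {z : P // z ≤ w}} (h : IsMin a.val) :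
    IsMin a := by
  intro c hc
  exact Subtype.coe_le_coe.mp (h (Subtype.coe_le_coe.mpr hc))

private lemma aux_rk_le [Finite P] {rk : P → ℕ} (hV : IsVine rk) {x y : P} (hxy : x ≤ y) :
    rk x ≤ rk y := by
  rcases lt_or_eq_of_le hxy with h | h
  · exact (hV.rk_strictMono x y h).le
  · rw [h]

private lemma aux_rk_pos [Finite P] {rk : P → ℕ} (hV : IsVine rk) (x : P) : 1 ≤ rk x := by
  by_cases hx : IsMin x
  · rw [hV.rk_min x hx]
  · obtain ⟨b, hb⟩ := not_isMin_iff.mp hx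
    have := hV.rk_strictMono b x hb
    omega

private lemma aux_vineRank_ideal [Finite P] {rk : P → ℕ} (hV : IsVine rk) (u : P) :
    vineRank (fun z : {x : P // x ≤ u} => rk z.val) = rk u := by
  apply le_antisymm
  · refine csSup_le ⟨rk u, ⟨u, le_refl u⟩, rfl⟩ ?_
    rintro n ⟨z, rfl⟩
    exact aux_rk_le hV z.prop
  · exact le_csSup (Set.Finite.bddAbove (Set.toFinite _)) ⟨⟨u, le_refl u⟩, rfl⟩

private lemma aux_ncard_completeUnion [Finite P] {rk : P → ℕ} (h : IsLRVine rk) (u : P) :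
    (completeUnion u).ncard = rk u := by
  have h2 := (h.2 u).rank_eq_dim
  rw [aux_vineRank_ideal h.1 u] at h2
  rw [h2]
  have himg : completeUnion u = Subtype.val '' {x : {z : P // z ≤ u} | IsMin x} := by
    ext m
    constructor
    · rintro ⟨hm, hmu⟩
      exact ⟨⟨m, hmu⟩, aux_isMin_subtype_to (a := ⟨m, hmu⟩) hm, rfl⟩
    · rintro ⟨z, hz, rfl⟩
      exact ⟨aux_isMin_subtype_of hz, z.prop⟩
  rw [himg, Set.ncard_image_of_injective _ Subtype.val_injective]

end AuxLemmas
section AuxLemmas2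

variable {P : Type*} [PartialOrder P]

private lemma aux_cover_structure [Finite P] {rk : P → ℕ} (h : IsLRVine rk) {u : P}
    (hu : ¬ IsMin u) :
    ∃ a b : P, a ≠ b ∧ {c : P | c ⋖ u} = {a, b} ∧
      completeUnion u = completeUnion a ∪ completeUnion b ∧
      conditionedSet u =
        (completeUnion a \ completeUnion b) ∪ (completeUnion b \ completeUnion a) := by
  obtain ⟨a, b, hab, hset⟩ := Set.ncard_eq_two.mp (h.1.covers_two u hu)
  have ha_cov : a ⋖ u := by
    have : a ∈ {c : P | c ⋖ u} := by rw [hset]; exact Set.mem_insert _ _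
    exact this
  have hb_cov : b ⋖ u := by
    have : b ∈ {c : P | c ⋖ u} := by rw [hset]; exact Set.mem_insert_of_mem _ rfl
    exact this
  have hmem : ∀ c : P, c ⋖ u → c = a ∨ c = b := by
    intro c hc
    have : c ∈ ({a, b} : Set P) := hset ▸ hc
    exact this
  refine ⟨a, b, hab, hset, ?_, ?_⟩
  · ext m
    constructor
    · rintro ⟨hm, hmu⟩
      have hmlt : m < u := lt_of_le_of_ne hmu (fun he => hu (he ▸ hm))
      obtain ⟨c, hmc, hcu⟩ := aux_exists_covBy_of_lt hmlt
      rcases hmem c hcu with rfl | rfl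
      · exact Or.inl ⟨hm, hmc⟩
      · exact Or.inr ⟨hm, hmc⟩
    · rintro (⟨hm, hma⟩ | ⟨hm, hmb⟩)
      · exact ⟨hm, hma.trans ha_cov.lt.le⟩
      · exact ⟨hm, hmb.trans hb_cov.lt.le⟩
  · ext m
    constructor
    · rintro ⟨hm, c, ⟨hcu, hmc⟩, huniq⟩
      rcases hmem c hcu with rfl | rfl
      · refine Or.inl ⟨⟨hm, hmc⟩, ?_⟩
        rintro ⟨-, hmb⟩
        exact hab (huniq b ⟨hb_cov, hmb⟩ ▸ rfl)
      · refine Or.inr ⟨⟨hm, hmc⟩, ?_⟩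
        rintro ⟨-, hma⟩
        exact hab ((huniq a ⟨ha_cov, hma⟩).symm ▸ rfl)
    · rintro (⟨⟨hm, hma⟩, hnb⟩ | ⟨⟨hm, hmb⟩, hna⟩)
      · refine ⟨hm, a, ⟨ha_cov, hma⟩, ?_⟩
        rintro y ⟨hyu, hmy⟩
        rcases hmem y hyu with rfl | rfl
        · rfl
        · exact absurd ⟨hm, hmy⟩ hnb
      · refine ⟨hm, b, ⟨hb_cov, hmb⟩, ?_⟩
        rintro y ⟨hyu, hmy⟩
        rcases hmem y hyu with rfl | rfl
        · exact absurd ⟨hm, hmy⟩ hna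
        · rfl

private lemma aux_ncard_conditionedSet [Finite P] {rk : P → ℕ} (h : IsLRVine rk) {u a b : P}
    (_hab : a ≠ b) (hcov : {c : P | c ⋖ u} = {a, b})
    (hUn : completeUnion u = completeUnion a ∪ completeUnion b)
    (hCd : conditionedSet u =
      (completeUnion a \ completeUnion b) ∪ (completeUnion b \ completeUnion a)) :
    (conditionedSet u).ncard = 2 := by
  have ha_cov : a ⋖ u := by
    have : a ∈ {c : P | c ⋖ u} := by rw [hcov]; exact Set.mem_insert _ _
    exact this
  have hb_cov : b ⋖ u := by
    have : b ∈ {c : P | c ⋖ u} := by rw [hcov]; exact Set.mem_insert_of_mem _ rfl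
    exact this
  have hra : rk u = rk a + 1 := h.1.rk_covBy a u ha_cov
  have hrb : rk u = rk b + 1 := h.1.rk_covBy b u hb_cov
  have hApos : 1 ≤ rk a := aux_rk_pos h.1 a
  have hnu := aux_ncard_completeUnion h u
  have hna := aux_ncard_completeUnion h a
  have hnb := aux_ncard_completeUnion h b
  have hincl := Set.ncard_union_add_ncard_inter (completeUnion a) (completeUnion b)
    (Set.toFinite _) (Set.toFinite _)
  rw [← hUn, hnu, hna, hnb] at hincl
  have hdiff : conditionedSet u =
      (completeUnion a ∪ completeUnion b) \ (completeUnion a ∩ completeUnion b) := by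
    rw [hCd]; ext x
    simp only [Set.mem_union, Set.mem_diff, Set.mem_inter_iff]
    tauto
  have hss : completeUnion a ∩ completeUnion b ⊆ completeUnion a ∪ completeUnion b :=
    fun x hx => Set.mem_union_left _ hx.1
  rw [hdiff, Set.ncard_diff hss (Set.toFinite _), ← hUn, hnu]
  omega

private lemma aux_min_upper [Finite P] {rk : P → ℕ} (h : IsLRVine rk) {u i j : P}
    (hu : ¬ IsMin u) (hC : conditionedSet u = {i, j})
    {y : P} (hy : y < u) (hiy : i ≤ y) (hjy : j ≤ y) : False := by
  obtain ⟨a, b, hab, hcov, hUn, hCd⟩ := aux_cover_structure h hu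
  obtain ⟨c, hyc, hcu⟩ := aux_exists_covBy_of_lt hy
  have hi_mem : i ∈ conditionedSet u := by rw [hC]; exact Set.mem_insert _ _
  have hj_mem : j ∈ conditionedSet u := by rw [hC]; exact Set.mem_insert_of_mem _ rfl
  have hc_mem : c = a ∨ c = b := by
    have : c ∈ ({a, b} : Set P) := hcov ▸ hcu
    exact this
  have hsub : completeUnion u ⊆ completeUnion c := by
    intro m hm
    by_cases hmij : m = i ∨ m = j
    · rcases hmij with rfl | rfl
      · exact ⟨hi_mem.1, hiy.trans hyc⟩
      · exact ⟨hj_mem.1, hjy.trans hyc⟩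
    · have hnotC : m ∉ conditionedSet u := by
        rw [hC]; push_neg at hmij; simp [hmij.1, hmij.2]
      have hm2 : m ∈ completeUnion a ∪ completeUnion b := hUn ▸ hm
      rw [hCd] at hnotC
      have hmab : m ∈ completeUnion a ∧ m ∈ completeUnion b := by
        simp only [Set.mem_union, Set.mem_diff] at hm2 hnotC
        tauto
      rcases hc_mem with rfl | rfl
      · exact hmab.1
      · exact hmab.2
  have hle := Set.ncard_le_ncard hsub (Set.toFinite _)
  rw [aux_ncard_completeUnion h u, aux_ncard_completeUnion h c] at hle
  have := h.1.rk_covBy c u hcu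
  omega

end AuxLemmas2
section AuxLemmas3

open SimpleGraph

variable {P : Type*} [PartialOrder P]

private lemma aux_ideal_path [Finite P] {rk : P → ℕ} (h : IsLRVine rk) {w x y : P} {ℓ : ℕ}
    (hxw : x ≤ w) (hyw : y ≤ w) (hrx : rk x = ℓ) (hry : rk y = ℓ) (hℓ : 1 ≤ ℓ) :
    ∃ pth : (coverGraph rk ℓ).Path x y,
      ∀ d ∈ pth.val.darts, ∃ p : P, p ≤ w ∧ d.fst ⋖ p ∧ d.snd ⋖ p := by
  classical
  set rkw : {z : P // z ≤ w} → ℕ := fun z => rk z.val with hrkw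
  have htree : ((coverGraph rkw ℓ).induce {z : {z : P // z ≤ w} | rkw z = ℓ}).Connected := by
    refine (h.2 w).tree ℓ hℓ ?_
    rw [aux_vineRank_ideal h.1 w, ← hrx]
    exact aux_rk_le h.1 hxw
  set G' := (coverGraph rkw ℓ).induce {z : {z : P // z ≤ w} | rkw z = ℓ} with hG'
  let F : G' →g coverGraph rk ℓ :=
    ⟨fun z => z.val.val, by
      rintro a b ⟨hne, ha, hb, p, hp1, hp2⟩
      exact ⟨fun he => hne (Subtype.val_injective he), ha, hb, p.val,
        aux_covBy_subtype hp1, aux_covBy_subtype hp2⟩⟩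
  have hFinj : Function.Injective F := fun a b hh => Subtype.ext (Subtype.ext hh)
  have key : ∀ {s t : {z : {z : P // z ≤ w} // z ∈ {z : {z : P // z ≤ w} | rkw z = ℓ}}}
      (W : G'.Walk s t), ∀ d ∈ (W.map F).darts, ∃ p : P, p ≤ w ∧ d.fst ⋖ p ∧ d.snd ⋖ p := by
    intro s t W
    induction W with
    | nil => intro d hd; simp at hd
    | @cons s m t hadj rest ih =>
      intro d hd
      rw [SimpleGraph.Walk.map_cons, SimpleGraph.Walk.darts_cons, List.mem_cons] at hd
      rcases hd with rfl | hd
      · obtain ⟨hne, ha, hb, p, hp1, hp2⟩ := hadj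
        exact ⟨p.val, p.prop, aux_covBy_subtype hp1, aux_covBy_subtype hp2⟩
      · exact ih d hd
  let x' : {z : {z : P // z ≤ w} // z ∈ {z : {z : P // z ≤ w} | rkw z = ℓ}} := ⟨⟨x, hxw⟩, hrx⟩
  let y' : {z : {z : P // z ≤ w} // z ∈ {z : {z : P // z ≤ w} | rkw z = ℓ}} := ⟨⟨y, hyw⟩, hry⟩
  obtain ⟨wk⟩ := htree.preconnected x' y'
  exact ⟨wk.toPath.map F hFinj, key wk.toPath.val⟩

private lemma aux_step [Finite P] {rk : P → ℕ} (h : IsLRVine rk) {u v x y : P} {ℓ : ℕ}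
    (hxy : x ≠ y) (hxu : x ≤ u) (hxv : x ≤ v) (hyu : y ≤ u) (hyv : y ≤ v)
    (hrx : rk x = ℓ) (hry : rk y = ℓ) (hℓ : 1 ≤ ℓ) :
    ∃ p : P, p ≤ u ∧ p ≤ v ∧ x ⋖ p := by
  obtain ⟨pthu, hu_d⟩ := aux_ideal_path h hxu hyu hrx hry hℓ
  obtain ⟨pthv, hv_d⟩ := aux_ideal_path h hxv hyv hrx hry hℓ
  have hpe : pthu = pthv :=
    SimpleGraph.isAcyclic_iff_path_unique.mp (h.1.forest ℓ) pthu pthv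
  obtain ⟨m, hadj, rest, hcons⟩ := SimpleGraph.Walk.exists_eq_cons_of_ne hxy pthu.val
  have hd : (⟨(x, m), hadj⟩ : (coverGraph rk ℓ).Dart) ∈ pthu.val.darts := by
    rw [hcons, SimpleGraph.Walk.darts_cons]
    exact List.mem_cons_self
  obtain ⟨p, hpu, hp1, hp2⟩ := hu_d _ hd
  obtain ⟨q, hqv, hq1, hq2⟩ := hv_d _ (hpe ▸ hd)
  have hne : x ≠ m := hadj.1
  have hrkm : rk x = rk m := hadj.2.1.trans hadj.2.2.1.symm
  have hpq : p = q := h.1.cover_unique x m hne hrkm p q hp1 hp2 hq1 hq2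
  exact ⟨p, hpu, hpq ▸ hqv, hp1⟩

end AuxLemmas3
section AuxLemmas4

variable {P : Type*} [PartialOrder P]

private lemma aux_climb [Finite P] {rk : P → ℕ} (h : IsLRVine rk) {u v i j : P}
    (hu : ¬ IsMin u) (hv : ¬ IsMin v)
    (hCu : conditionedSet u = {i, j}) (hCv : conditionedSet v = {i, j}) :
    ∀ d ℓ x y, 1 ≤ ℓ → rk x = ℓ → rk y = ℓ → x ≤ u → x ≤ v → y ≤ u → y ≤ v →
      i ≤ x → j ≤ y → rk u ≤ ℓ + d → u = v := by
  intro d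
  induction d with
  | zero =>
    intro ℓ x y h1 h2 h3 h4 h5 h6 h7 h8 h9 h10
    by_cases hxy : x = y
    · subst hxy
      have hxu : x = u := by
        rcases lt_or_eq_of_le h4 with hlt | he
        · exact absurd (aux_min_upper h hu hCu hlt h8 h9) (fun f => f)
        · exact he
      have hxv : x = v := by
        rcases lt_or_eq_of_le h5 with hlt | he
        · exact absurd (aux_min_upper h hv hCv hlt h8 h9) (fun f => f)
        · exact he
      rw [← hxu, hxv]
    · exfalso
      have hxu : x = u := by
        rcases lt_or_eq_of_le h4 with hlt | he
        · have := h.1.rk_strictMono x u hlt; omega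
        · exact he
      have hyu : y = u := by
        rcases lt_or_eq_of_le h6 with hlt | he
        · have := h.1.rk_strictMono y u hlt; omega
        · exact he
      exact hxy (hxu.trans hyu.symm)
  | succ d ih =>
    intro ℓ x y h1 h2 h3 h4 h5 h6 h7 h8 h9 h10
    by_cases hxy : x = y
    · subst hxy
      have hxu : x = u := by
        rcases lt_or_eq_of_le h4 with hlt | he
        · exact absurd (aux_min_upper h hu hCu hlt h8 h9) (fun f => f)
        · exact he
      have hxv : x = v := by
        rcases lt_or_eq_of_le h5 with hlt | he
        · exact absurd (aux_min_upper h hv hCv hlt h8 h9) (fun f => f)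
        · exact he
      rw [← hxu, hxv]
    · obtain ⟨p, hpu, hpv, hxp⟩ := aux_step h hxy h4 h5 h6 h7 h2 h3 h1
      obtain ⟨q, hqu, hqv, hyq⟩ := aux_step h (Ne.symm hxy) h6 h7 h4 h5 h3 h2 h1
      have hrp : rk p = ℓ + 1 := by rw [h.1.rk_covBy x p hxp, h2]
      have hrq : rk q = ℓ + 1 := by rw [h.1.rk_covBy y q hyq, h3]
      exact ih (ℓ + 1) p q (by omega) hrp hrq hpu hpv hqu hqv
        (h8.trans hxp.lt.le) (h9.trans hyq.lt.le) (by omega)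

end AuxLemmas4

/-- Two non-minimal nodes of an LR-vine with equal conditioned sets are equal. -/
theorem conditionedSet_injective {P : Type*} [PartialOrder P] [Finite P]
    (rk : P → ℕ) (h : IsLRVine rk) (u v : P) (hu : ¬ IsMin u) (hv : ¬ IsMin v)
    (hC : conditionedSet u = conditionedSet v) : u = v := by
  obtain ⟨a, b, hab, hcov, hUn, hCd⟩ := aux_cover_structure h hu
  obtain ⟨i, j, hij, hCu⟩ :=
    Set.ncard_eq_two.mp (aux_ncard_conditionedSet h hab hcov hUn hCd)
  have hCv : conditionedSet v = {i, j} := hC.symm.trans hCu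
  have hi_u : i ∈ conditionedSet u := by rw [hCu]; exact Set.mem_insert _ _
  have hj_u : j ∈ conditionedSet u := by rw [hCu]; exact Set.mem_insert_of_mem _ rfl
  have hi_v : i ∈ conditionedSet v := by rw [hCv]; exact Set.mem_insert _ _
  have hj_v : j ∈ conditionedSet v := by rw [hCv]; exact Set.mem_insert_of_mem _ rfl
  have le_of_mem : ∀ w m : P, m ∈ conditionedSet w → m ≤ w := by
    rintro w m ⟨hm, c, ⟨hcw, hmc⟩, -⟩
    exact hmc.trans hcw.lt.le
  exact aux_climb h hu hv hCu hCv (rk u) 1 i j le_rfl (h.1.rk_min i hi_u.1)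
    (h.1.rk_min j hj_u.1) (le_of_mem u i hi_u) (le_of_mem v i hi_v)
    (le_of_mem u j hj_u) (le_of_mem v j hj_v) le_rfl le_rfl (by omega)
end
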